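/- Let g be a real Banach-Lie algebra, h a closed subalgebra, V a closed complement (g = h ⊕ V), and k a closed complex subalgebra of g_ℂ with k + k̄ = g_ℂ and k ∩ k̄ = h_ℂ. Then g_ℂ = h_ℂ ⊕ (V_ℂ ∩ k) ⊕ (V_ℂ ∩ k̄) as a topological direct sum of closed complex subspaces. -/

import Mathlib

/-- Let `g_ℂ` (conjugation `σ`) decompose as `g_ℂ = h_ℂ ⊕ V_ℂ` with
`h_ℂ`, `V_ℂ` closed `σ`-invariant complex subspaces, `h_ℂ` a subalgebra, and let `k`
be a closed complex subalgebra with `k + k̄ = g_ℂ` and `k ∩ k̄ = h_ℂ`.  Then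
`g_ℂ = h_ℂ ⊕ (V_ℂ ∩ k) ⊕ (V_ℂ ∩ k̄)`: every `z ∈ g_ℂ` has a unique decomposition
`z = a + b + c` with `a ∈ h_ℂ`, `b ∈ V_ℂ ∩ k`, `c ∈ V_ℂ ∩ k̄` (a topological direct
sum of closed subspaces, automatic by the open mapping theorem). -/
theorem stmt_15 {gc : Type*} [NormedAddCommGroup gc] [NormedSpace ℂ gc] [CompleteSpace gc]
    (σ : gc →ₗ[ℝ] gc)
    (hσ_cont : Continuous σ)
    (hσ_invol : ∀ z, σ (σ z) = z)
    (hσ_antilinear : ∀ (c : ℂ) (z : gc), σ (c • z) = (starRingEnd ℂ c) • σ z)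
    (lb : gc →L[ℂ] gc →L[ℂ] gc)
    (hlb_skew : ∀ x y : gc, lb x y = -lb y x)
    (hlb_jacobi : ∀ x y z : gc, lb x (lb y z) + lb y (lb z x) + lb z (lb x y) = 0)
    (hlbσ : ∀ x y : gc, σ (lb x y) = lb (σ x) (σ y))
    (hC VC : Submodule ℂ gc)
    (hhC_closed : IsClosed (hC : Set gc)) (hVC_closed : IsClosed (VC : Set gc))
    (hhCσ : ∀ z ∈ hC, σ z ∈ hC) (hVCσ : ∀ z ∈ VC, σ z ∈ VC)
    (hhC_subalg : ∀ x ∈ hC, ∀ y ∈ hC, lb x y ∈ hC)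
    (hcompl : IsCompl hC VC)
    (k : Submodule ℂ gc)
    (hk_closed : IsClosed (k : Set gc))
    (hk_subalg : ∀ x ∈ k, ∀ y ∈ k, lb x y ∈ k)
    (hk_sup : ∀ z : gc, ∃ a b : gc, a ∈ k ∧ b ∈ k ∧ z = a + σ b)
    (hk_inf : ∀ z : gc, (z ∈ k ∧ σ z ∈ k) ↔ z ∈ hC) :
    ∀ z : gc, ∃! t : gc × gc × gc,
      t.1 ∈ hC ∧ t.2.1 ∈ VC ∧ t.2.1 ∈ k ∧ t.2.2 ∈ VC ∧ σ t.2.2 ∈ k ∧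
      z = t.1 + t.2.1 + t.2.2 := by
  have hdisj : ∀ x, x ∈ hC → x ∈ VC → x = 0 :=
    fun x hx hx' => Submodule.disjoint_def.mp hcompl.disjoint x hx hx'
  intro z
  obtain ⟨a, b, ha, hb, hz⟩ := hk_sup z
  obtain ⟨ah, aV, hah, haV, haeq⟩ :=
    Submodule.codisjoint_iff_exists_add_eq.mp hcompl.codisjoint a
  obtain ⟨bh, bV, hbh, hbV, hbeq⟩ :=
    Submodule.codisjoint_iff_exists_add_eq.mp hcompl.codisjoint (σ b)
  have haVk : aV ∈ k := by
    have h1 : ah ∈ k := ((hk_inf ah).mpr hah).1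
    have h2 : a - ah ∈ k := k.sub_mem ha h1
    simpa [← haeq, add_sub_cancel_left] using h2
  have hbVk : σ bV ∈ k := by
    have h1 : σ bh ∈ k := ((hk_inf bh).mpr hbh).2
    have h2 : σ bh + σ bV = b := by
      have := congrArg σ hbeq
      rwa [map_add, hσ_invol] at this
    have h3 : σ bV = b - σ bh := eq_sub_of_add_eq' h2
    rw [h3]; exact k.sub_mem hb h1
  refine ⟨(ah + bh, aV, bV), ⟨hC.add_mem hah hbh, haV, haVk, hbV, hbVk, ?_⟩, ?_⟩
  · rw [hz, ← haeq, ← hbeq]; dsimp only; abel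
  · rintro ⟨a', b', c'⟩ ⟨ha', hb', hb'k, hc', hc'k, hz'⟩
    simp only at ha' hb' hb'k hc' hc'k hz'
    have hsum : a' + b' + c' = ah + bh + aV + bV := by
      rw [← hz', hz, ← haeq, ← hbeq]; abel
    have hw : b' - aV + (c' - bV) = ah + bh - a' := by
      rw [eq_sub_iff_add_eq,
        show b' - aV + (c' - bV) + a' = a' + b' + c' - (aV + bV) from by abel, hsum]
      abel
    have hwV : b' - aV + (c' - bV) ∈ VC :=
      VC.add_mem (VC.sub_mem hb' haV) (VC.sub_mem hc' hbV)
    have hwh : b' - aV + (c' - bV) ∈ hC := hw ▸ hC.sub_mem (hC.add_mem hah hbh) ha'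
    have hw0 : b' - aV + (c' - bV) = 0 := hdisj _ hwh hwV
    have hu : b' - aV = -(c' - bV) := eq_neg_of_add_eq_zero_left hw0
    have huk : b' - aV ∈ k := k.sub_mem hb'k haVk
    have huσk : σ (b' - aV) ∈ k := by
      rw [hu, map_neg, map_sub]
      exact k.neg_mem (k.sub_mem hc'k hbVk)
    have huh : b' - aV ∈ hC := (hk_inf _).mp ⟨huk, huσk⟩
    have huV : b' - aV ∈ VC := VC.sub_mem hb' haV
    have hu0 : b' - aV = 0 := hdisj _ huh huV
    have hc0 : c' - bV = 0 := by rwa [hu0, zero_add] at hw0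
    rw [hu0, zero_add] at hw  -- hw : c' - bV = ah + bh - a'
    rw [hc0] at hw
    have ha0 : a' = ah + bh := (sub_eq_zero.mp hw.symm).symm
    ext
    · exact ha0
    · exact sub_eq_zero.mp hu0
    · exact sub_eq_zero.mp hc0
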